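/- Let X₁,…,Xₙ be real numbers with sample mean X̄ₙ = n⁻¹Σⱼ Xⱼ and sample variance Sₙ² = n⁻¹Σⱼ(Xⱼ − X̄ₙ)² > 0. Define d̂ₙ(s) = -n⁻¹ Σⱼ (Xⱼ − X̄ₙ)/Sₙ² · 1{Xⱼ ≤ s}. Then d̂ₙ(s) ≥ 0 for all s ∈ ℝ and ∫_ℝ d̂ₙ(s) ds = 1, i.e., d̂ₙ is a probability density. -/

import Mathlib

open MeasureTheory Finset

lemma aux_ind (a b s : ℝ) :
    (if s < b then (1:ℝ) else 0) - (if s < a then 1 else 0)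
      = Set.indicator (Set.Ico a b) (fun _ => (1:ℝ)) s
        - Set.indicator (Set.Ico b a) (fun _ => (1:ℝ)) s := by
  rcases lt_or_ge s b with h1 | h1 <;> rcases lt_or_ge s a with h2 | h2
  · simp [Set.indicator_apply, Set.mem_Ico, h1, h2, not_le.2 h1, not_le.2 h2]
  · simp [Set.indicator_apply, Set.mem_Ico, h1, h2, not_le.2 h1, not_lt.2 h2]
  · simp [Set.indicator_apply, Set.mem_Ico, h1, h2, not_lt.2 h1, not_le.2 h2]
  · simp [Set.indicator_apply, Set.mem_Ico, h1, h2, not_lt.2 h1, not_lt.2 h2]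

lemma aux_intg (a b : ℝ) :
    Integrable (fun s => (if s < b then (1:ℝ) else 0) - (if s < a then 1 else 0)) := by
  have h1 : Integrable (fun s => Set.indicator (Set.Ico a b) (fun _ => (1:ℝ)) s) := by
    rw [integrable_indicator_iff measurableSet_Ico]
    exact integrableOn_const measure_Ico_lt_top.ne
  have h2 : Integrable (fun s => Set.indicator (Set.Ico b a) (fun _ => (1:ℝ)) s) := by
    rw [integrable_indicator_iff measurableSet_Ico]
    exact integrableOn_const measure_Ico_lt_top.ne
  have := h1.sub h2
  refine this.congr ?_
  filter_upwards with s
  exact (aux_ind a b s).symm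

lemma aux_int_val (a b : ℝ) :
    ∫ s, ((if s < b then (1:ℝ) else 0) - (if s < a then 1 else 0)) = b - a := by
  have key : ∀ c d : ℝ, ∫ s, Set.indicator (Set.Ico c d) (fun _ => (1:ℝ)) s = max (d - c) 0 := by
    intro c d
    rw [integral_indicator measurableSet_Ico, setIntegral_const, measureReal_def, Real.volume_Ico,
      ENNReal.toReal_ofReal', smul_eq_mul, mul_one]
  have hi1 : Integrable (fun s => Set.indicator (Set.Ico a b) (fun _ => (1:ℝ)) s) := by
    rw [integrable_indicator_iff measurableSet_Ico]
    exact integrableOn_const measure_Ico_lt_top.ne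
  have hi2 : Integrable (fun s => Set.indicator (Set.Ico b a) (fun _ => (1:ℝ)) s) := by
    rw [integrable_indicator_iff measurableSet_Ico]
    exact integrableOn_const measure_Ico_lt_top.ne
  calc ∫ s, ((if s < b then (1:ℝ) else 0) - (if s < a then 1 else 0))
      = ∫ s, (Set.indicator (Set.Ico a b) (fun _ => (1:ℝ)) s
          - Set.indicator (Set.Ico b a) (fun _ => (1:ℝ)) s) := by
        congr 1; funext s; exact aux_ind a b s
    _ = max (b - a) 0 - max (a - b) 0 := by rw [integral_sub hi1 hi2, key, key]
    _ = b - a := by rcases le_total a b with h | h <;>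
        simp [max_eq_left, max_eq_right, sub_nonneg.2 h, sub_nonpos.2 h]

theorem stmt_17 (n : ℕ) (hn : 0 < n) (X : Fin n → ℝ)
    (Xbar S2 : ℝ) (hXbar : Xbar = (∑ j, X j) / n)
    (hS2 : S2 = (∑ j, (X j - Xbar) ^ 2) / n) (hS2pos : 0 < S2)
    (dhat : ℝ → ℝ)
    (hd : ∀ s, dhat s
      = -(1 / n) * ∑ j, (X j - Xbar) / S2 * (if X j ≤ s then 1 else 0)) :
    (∀ s, 0 ≤ dhat s) ∧ ∫ s : ℝ, dhat s = 1 := by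
  have hnpos : (0:ℝ) < n := Nat.cast_pos.2 hn
  have hn' : (n:ℝ) ≠ 0 := ne_of_gt hnpos
  have hsum0 : ∑ j, (X j - Xbar) = 0 := by
    rw [Finset.sum_sub_distrib, Finset.sum_const, Finset.card_univ, Fintype.card_fin, hXbar, nsmul_eq_mul]
    field_simp
    ring
  set c := 1 / ((n:ℝ) * S2) with hc
  have hcpos : 0 < c := by positivity
  have hrep : ∀ s, dhat s = c * ∑ j, (X j - Xbar) *
      ((if s < X j then (1:ℝ) else 0) - (if s < Xbar then 1 else 0)) := by
    intro s
    rw [hd s]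
    have e1 : ∀ j : Fin n, (X j - Xbar) *
        ((if s < X j then (1:ℝ) else 0) - (if s < Xbar then 1 else 0))
        = -((X j - Xbar) * (if X j ≤ s then 1 else 0))
          + (X j - Xbar) * (1 - (if s < Xbar then 1 else 0)) := by
      intro j
      rcases le_or_gt (X j) s with h | h
      · rw [if_pos h, if_neg (not_lt.2 h)]; ring
      · rw [if_neg (not_le.2 h), if_pos h]; ring
    have e2 : ∑ j, (X j - Xbar) *
        ((if s < X j then (1:ℝ) else 0) - (if s < Xbar then 1 else 0))
        = -∑ j, (X j - Xbar) * (if X j ≤ s then (1:ℝ) else 0) := by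
      rw [Finset.sum_congr rfl (fun j _ => e1 j), Finset.sum_add_distrib, ← Finset.sum_mul,
        hsum0, zero_mul, add_zero, Finset.sum_neg_distrib]
    rw [e2]
    have e3 : ∑ j, (X j - Xbar) / S2 * (if X j ≤ s then (1:ℝ) else 0)
        = S2⁻¹ * ∑ j, (X j - Xbar) * (if X j ≤ s then (1:ℝ) else 0) := by
      rw [Finset.mul_sum]
      exact Finset.sum_congr rfl (fun j _ => by ring)
    rw [e3, hc]
    field_simp
  have hterm : ∀ (s : ℝ) (j : Fin n), 0 ≤ (X j - Xbar) *
      ((if s < X j then (1:ℝ) else 0) - (if s < Xbar then 1 else 0)) := by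
    intro s j
    rcases lt_or_ge s (X j) with h1 | h1 <;> rcases lt_or_ge s Xbar with h2 | h2
    · simp [h1, h2]
    · rw [if_pos h1, if_neg (not_lt.2 h2)]
      nlinarith
    · rw [if_neg (not_lt.2 h1), if_pos h2]
      nlinarith
    · simp [not_lt.2 h1, not_lt.2 h2]
  constructor
  · intro s
    rw [hrep s]
    exact mul_nonneg hcpos.le (Finset.sum_nonneg fun j _ => hterm s j)
  · have hint : ∀ j : Fin n, Integrable (fun s => (X j - Xbar) *
        ((if s < X j then (1:ℝ) else 0) - (if s < Xbar then 1 else 0))) :=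
      fun j => (aux_intg Xbar (X j)).const_mul _
    have hintval : ∀ j : Fin n, ∫ s, (X j - Xbar) *
        ((if s < X j then (1:ℝ) else 0) - (if s < Xbar then 1 else 0)) = (X j - Xbar) ^ 2 := by
      intro j
      rw [integral_const_mul, aux_int_val Xbar (X j)]
      ring
    have hS2sum : ∑ j, (X j - Xbar) ^ 2 = n * S2 := by
      rw [hS2]; field_simp
    calc ∫ s, dhat s = ∫ s, c * ∑ j, (X j - Xbar) *
          ((if s < X j then (1:ℝ) else 0) - (if s < Xbar then 1 else 0)) := by
          simp only [hrep]
      _ = c * ∑ j, ∫ s, (X j - Xbar) *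
          ((if s < X j then (1:ℝ) else 0) - (if s < Xbar then 1 else 0)) := by
          rw [integral_const_mul, integral_finset_sum univ (fun j _ => hint j)]
      _ = c * ∑ j, (X j - Xbar) ^ 2 := by
          rw [Finset.sum_congr rfl (fun j _ => hintval j)]
      _ = 1 := by
          rw [hS2sum, hc]
          field_simp
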